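/- Let n ∈ ℕ, S = {0, 1, …, 2^n − 1}, and p ∈ (0,1]. Let P_XY be the distribution on S×S given by P_XY(x,y) = p·2^{−n}·[x = y] + (1−p)·2^{−2n}, and let R_{Y→Y} be the channel on S given by R_{Y→Y}(y'|y) = p·[y' = y] + (1−p)·2^{−n}. Then the uniform distribution on S×S is invariant under id⊗R_{Y→Y}, and consequently for every α ∈ (1,∞), Λ_α(P_XY ‖ R_{Y→Y}) ≤ D_α(P_XY ‖ Unif_{S×S}) = (1/(α−1)) · log( 2^{−n}(1−p)^α(2^n − 1) + 2^{−n}·((1−p) + p·2^n)^α ). -/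

import Mathlib

noncomputable section

namespace CIT

/-- A probability distribution on a finite set. -/
def IsDist {X : Type*} [Fintype X] (p : X → ℝ) : Prop :=
  (∀ x, 0 ≤ p x) ∧ ∑ x, p x = 1

/-- Support inclusion `supp p ⊆ supp q`. -/
def suppLe {X : Type*} (p q : X → ℝ) : Prop := ∀ x, p x ≠ 0 → q x ≠ 0

open Classical in
/-- Relative entropy (base 2), with `0·log 0 = 0`, `+∞` if the support
condition fails. -/
def relEnt {X : Type*} [Fintype X] (p q : X → ℝ) : EReal :=
  if suppLe p q then ((∑ x, p x * Real.logb 2 (p x / q x) : ℝ) : EReal) else ⊤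

open Classical in
/-- Max-relative entropy `D_max(p‖q) = log max_{x ∈ supp p} p(x)/q(x)`,
`+∞` if the support condition fails. -/
def dMax {X : Type*} [Fintype X] (p q : X → ℝ) : EReal :=
  if suppLe p q then
    ((Real.logb 2 (sSup {r : ℝ | ∃ x, p x ≠ 0 ∧ r = p x / q x}) : ℝ) : EReal)
  else ⊤

open Classical in
/-- Rényi relative entropy of order `α` (base 2), with `D_1 := D` and `+∞`
when `α > 1` and the support condition fails. -/
def renyi {X : Type*} [Fintype X] (α : ℝ) (p q : X → ℝ) : EReal :=
  if α = 1 then relEnt p q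
  else if 1 < α ∧ ¬ suppLe p q then ⊤
  else (((α - 1)⁻¹ * Real.logb 2 (∑ x, p x ^ α * q x ^ (1 - α)) : ℝ) : EReal)

/-- The `XY`-marginal of a tripartite distribution. -/
def margXY {X Y Z : Type*} [Fintype Z] (P : X × Y × Z → ℝ) : X × Y → ℝ :=
  fun t => ∑ z, P (t.1, t.2, z)

/-- The `YZ`-marginal of a tripartite distribution. -/
def margYZ {X Y Z : Type*} [Fintype X] (P : X × Y × Z → ℝ) : Y × Z → ℝ :=
  fun t => ∑ x, P (x, t.1, t.2)

/-- The `Y`-marginal of a tripartite distribution. -/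
def margY {X Y Z : Type*} [Fintype X] [Fintype Z] (P : X × Y × Z → ℝ) : Y → ℝ :=
  fun y => ∑ x, ∑ z, P (x, y, z)

/-- Conditional mutual information
`I(X:Z|Y)_P = Σ P(x,y,z) log( P(x,y,z)·P_Y(y) / (P_XY(x,y)·P_YZ(y,z)) )`. -/
def cmi {X Y Z : Type*} [Fintype X] [Fintype Y] [Fintype Z] (P : X × Y × Z → ℝ) : ℝ :=
  ∑ s : X × Y × Z,
    P s * Real.logb 2 (P s * margY P s.2.1 / (margXY P (s.1, s.2.1) * margYZ P (s.2.1, s.2.2)))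

/-- A classical channel from `Y` to `W`: a family of conditional distributions. -/
def IsChannel {Y W : Type*} [Fintype W] (R : Y → W → ℝ) : Prop :=
  ∀ y, (∀ w, 0 ≤ R y w) ∧ ∑ w, R y w = 1

/-- Action `(id ⊗ R)` of a channel `R : Y → W` on a joint distribution on `X × Y`. -/
def applyChan {X Y W : Type*} [Fintype Y] (R : Y → W → ℝ) (P : X × Y → ℝ) : X × W → ℝ :=
  fun t => ∑ y, P (t.1, y) * R y t.2

/-- Action of a channel `R : Y → W` on a distribution on `Y`. -/
def chanOnDist {Y W : Type*} [Fintype Y] (R : Y → W → ℝ) (q : Y → ℝ) : W → ℝ :=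
  fun w => ∑ y, q y * R y w

/-- Marginal channel `R_{Y→Y}(y'|y) = Σ_{z'} R(y',z'|y)`. -/
def margChan {Y Y' Z' : Type*} [Fintype Z'] (R : Y → Y' × Z' → ℝ) : Y → Y' → ℝ :=
  fun y y' => ∑ z', R y (y', z')

end CIT

open CIT in
/-- the uniform distribution on `S×S` is invariant under
`id⊗R_{Y→Y}`, and consequently for every `α ∈ (1,∞)`,
`Λ_α(P_XY‖R_{Y→Y}) ≤ D_α(P_XY‖Unif) = (1/(α−1))·log(2^{−n}(1−p)^α(2^n−1) + 2^{−n}((1−p)+p·2^n)^α)`. -/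
theorem lambda_alpha_upper_bound (n : ℕ) (p : ℝ) (hp0 : 0 < p) (hp1 : p ≤ 1)
    (PXY : Fin (2 ^ n) × Fin (2 ^ n) → ℝ)
    (hPXY : PXY = fun t =>
      p * ((2 ^ n : ℕ) : ℝ)⁻¹ * (if t.1 = t.2 then 1 else 0) +
        (1 - p) * (((2 ^ n : ℕ) : ℝ)⁻¹) ^ 2)
    (Rch : Fin (2 ^ n) → Fin (2 ^ n) → ℝ)
    (hRch : Rch = fun y y' =>
      p * (if y' = y then 1 else 0) + (1 - p) * ((2 ^ n : ℕ) : ℝ)⁻¹) :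
    applyChan Rch (fun _ : Fin (2 ^ n) × Fin (2 ^ n) => (((2 ^ n : ℕ) : ℝ)⁻¹) ^ 2) =
        (fun _ => (((2 ^ n : ℕ) : ℝ)⁻¹) ^ 2) ∧
      ∀ α : ℝ, 1 < α →
        (⨅ τ ∈ {τ : Fin (2 ^ n) × Fin (2 ^ n) → ℝ |
            IsDist τ ∧ applyChan Rch τ = τ}, renyi α PXY τ)
            ≤ renyi α PXY (fun _ => (((2 ^ n : ℕ) : ℝ)⁻¹) ^ 2) ∧
          renyi α PXY (fun _ => (((2 ^ n : ℕ) : ℝ)⁻¹) ^ 2) =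
            (((α - 1)⁻¹ * Real.logb 2
              (((2 ^ n : ℕ) : ℝ)⁻¹ * (1 - p) ^ α * (((2 ^ n : ℕ) : ℝ) - 1) +
                ((2 ^ n : ℕ) : ℝ)⁻¹ * ((1 - p) + p * ((2 ^ n : ℕ) : ℝ)) ^ α) : ℝ) : EReal) := by
  have hNpos : (0:ℝ) < ((2 ^ n : ℕ) : ℝ) := by positivity
  set N : ℝ := ((2 ^ n : ℕ) : ℝ) with hNdef
  have hNne : N ≠ 0 := ne_of_gt hNpos
  have h1p : (0:ℝ) ≤ 1 - p := by linarith
  have hinv : applyChan Rch (fun _ : Fin (2 ^ n) × Fin (2 ^ n) => (N⁻¹) ^ 2) =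
      (fun _ => (N⁻¹) ^ 2) := by
    funext t
    simp only [applyChan, hRch, mul_add, mul_ite, mul_one, mul_zero,
      Finset.sum_add_distrib, Finset.sum_ite_eq, Finset.mem_univ, if_true,
      Finset.sum_const, Finset.card_univ, Fintype.card_fin, nsmul_eq_mul]
    rw [show ((2 ^ n : ℕ) : ℝ) = N from rfl]
    field_simp
    ring
  refine ⟨hinv, fun α hα => ?_⟩
  have hα1 : α ≠ 1 := ne_of_gt hα
  have hsupp : suppLe PXY (fun _ : Fin (2 ^ n) × Fin (2 ^ n) => (N⁻¹) ^ 2) := by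
    intro x hx
    have : (N⁻¹ : ℝ) ^ 2 ≠ 0 := by positivity
    exact this
  have hrenyi : renyi α PXY (fun _ : Fin (2 ^ n) × Fin (2 ^ n) => (N⁻¹) ^ 2) =
      (((α - 1)⁻¹ * Real.logb 2
        (N⁻¹ * (1 - p) ^ α * (N - 1) + N⁻¹ * ((1 - p) + p * N) ^ α) : ℝ) : EReal) := by
    have hsum : ∑ s : Fin (2 ^ n) × Fin (2 ^ n), PXY s ^ α * ((N⁻¹ : ℝ) ^ 2) ^ (1 - α) =
        N⁻¹ * (1 - p) ^ α * (N - 1) + N⁻¹ * ((1 - p) + p * N) ^ α := by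
      have hU : (0:ℝ) < (N⁻¹) ^ 2 := by positivity
      set A : ℝ := ((1 - p) + p * N) ^ α * (N⁻¹) ^ 2 with hA
      set B : ℝ := (1 - p) ^ α * (N⁻¹) ^ 2 with hB
      have key : ∀ s : Fin (2 ^ n) × Fin (2 ^ n),
          PXY s ^ α * ((N⁻¹ : ℝ) ^ 2) ^ (1 - α) =
            B + (if s.1 = s.2 then A - B else 0) := by
        intro s
        have hC : ((N⁻¹ : ℝ) ^ 2) ^ α * ((N⁻¹ : ℝ) ^ 2) ^ (1 - α) = (N⁻¹) ^ 2 := by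
          rw [← Real.rpow_add hU]
          norm_num
        rw [hPXY]
        by_cases h : s.1 = s.2
        · simp only [h, if_true, mul_one]
          have hbase : p * N⁻¹ + (1 - p) * (N⁻¹) ^ 2 = ((1 - p) + p * N) * (N⁻¹) ^ 2 := by
            field_simp
            ring
          rw [hbase, Real.mul_rpow (by positivity) (le_of_lt hU), mul_assoc, hC]
          simp [hA]
        · simp only [h, if_false, mul_zero, zero_add, add_zero]
          rw [Real.mul_rpow h1p (le_of_lt hU), mul_assoc, hC]
      rw [Finset.sum_congr rfl (fun s _ => key s)]
      rw [Finset.sum_add_distrib, Finset.sum_const, Finset.card_univ]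
      have hdiag : ∑ s : Fin (2 ^ n) × Fin (2 ^ n),
          (if s.1 = s.2 then A - B else 0) = ((2 ^ n : ℕ) : ℝ) * (A - B) := by
        rw [Fintype.sum_prod_type]
        simp [Finset.sum_ite_eq, Finset.card_univ, mul_comm]
        ring
      rw [hdiag]
      simp only [Fintype.card_prod, Fintype.card_fin, nsmul_eq_mul, hA, hB]
      rw [show (((2 ^ n) * 2 ^ n : ℕ) : ℝ) = N * N by push_cast; rw [hNdef]; push_cast; ring,
        show ((2 ^ n : ℕ) : ℝ) = N from rfl]
      field_simp
      ring
    simp only [renyi, if_neg hα1, hα, hsupp, not_true, and_false, if_false, hsum]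
  refine ⟨?_, hrenyi⟩
  have hmem : (fun _ : Fin (2 ^ n) × Fin (2 ^ n) => (N⁻¹) ^ 2) ∈
      {τ : Fin (2 ^ n) × Fin (2 ^ n) → ℝ | IsDist τ ∧ applyChan Rch τ = τ} := by
    refine ⟨⟨fun _ => by positivity, ?_⟩, hinv⟩
    rw [Finset.sum_const, Finset.card_univ]
    simp only [Fintype.card_prod, Fintype.card_fin, nsmul_eq_mul]
    rw [show (((2 ^ n) * 2 ^ n : ℕ) : ℝ) = N * N by push_cast; rw [hNdef]; push_cast; ring]
    field_simp
  exact iInf₂_le _ hmem
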